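/- The average value ζ̃, defined by ζ̃_i(v) = v({i}) + Δ/n, is the unique function f from the class of 1-convex-extendable minimal incomplete games on N to ℝ^n satisfying, for every such game v: (1) efficiency: Σ_{i∈N} f_i(v) = v(N); (2) elementary symmetry: for all i, j ∈ N with i ≠ j, v({i}) = v({j}) implies f_i(v) = f_j(v); (3) zero-normalisation invariance: f_i(v) = v({i}) + f_i(v_0) for all i ∈ N, where v_0 is the zero-normalised game of v. -/

import Mathlib

noncomputable section

open Finset

/-- The upper (utopia) vector `b^w` of a cooperative game `w` on `N = {1,…,n}`. -/
def bvec (n : ℕ) (w : Finset (Fin n) → ℝ) (i : Fin n) : ℝ :=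
  w Finset.univ - w (Finset.univ \ {i})

/-- A cooperative game `w` is 1-convex: for every nonempty coalition `S`,
`w S ≤ w N - b^w(N \ S)`, and `b^w(N) ≥ w N`. -/
def OneConvex (n : ℕ) (w : Finset (Fin n) → ℝ) : Prop :=
  (∀ S : Finset (Fin n), S.Nonempty →
      w S ≤ w Finset.univ - ∑ i ∈ Finset.univ \ S, bvec n w i) ∧
  w Finset.univ ≤ ∑ i : Fin n, bvec n w i

/-- The set of 1-convex extensions of an incomplete game `(N, K, v)`:
cooperative games (`w ∅ = 0`) that are 1-convex and agree with `v` on `K`. -/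
def Cext (n : ℕ) (K : Finset (Finset (Fin n))) (v : Finset (Fin n) → ℝ) :
    Set (Finset (Fin n) → ℝ) :=
  {w | w ∅ = 0 ∧ OneConvex n w ∧ ∀ S ∈ K, w S = v S}

/-- `K_min`: the empty coalition, the grand coalition and all singletons. -/
def KminF (n : ℕ) : Finset (Finset (Fin n)) :=
  {∅, Finset.univ} ∪ Finset.univ.image (fun i => ({i} : Finset (Fin n)))

/-- The total excess `Δ = v(N) - ∑_{i ∈ N} v({i})`. -/
def totalExcess (n : ℕ) (v : Finset (Fin n) → ℝ) : ℝ :=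
  v Finset.univ - ∑ i : Fin n, v {i}

/-- A minimal incomplete game (only the values on `K_min` are relevant) that is
1-convex-extendable, i.e. `v ∅ = 0` and `Δ ≥ 0`. -/
def MinExtendable (n : ℕ) (v : Finset (Fin n) → ℝ) : Prop :=
  v ∅ = 0 ∧ 0 ≤ totalExcess n v

/-- The extreme games `v^i` of the set of 1-convex extensions of a minimal
incomplete game. -/
def extGame (n : ℕ) (v : Finset (Fin n) → ℝ) (i : Fin n) (S : Finset (Fin n)) : ℝ :=
  if S ∈ KminF n then v S
  else if i ∈ S then v Finset.univ - ∑ j ∈ Finset.univ \ S, v {j}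
  else v Finset.univ - ∑ j ∈ Finset.univ \ S, v {j} - totalExcess n v

/-- The upper game of the set of 1-convex extensions of a minimal incomplete game. -/
def upperGameMin (n : ℕ) (v : Finset (Fin n) → ℝ) (S : Finset (Fin n)) : ℝ :=
  if S ∈ KminF n then v S else v Finset.univ - ∑ i ∈ Finset.univ \ S, v {i}

/-- The index set `E = 2^N \ ({∅, N} ∪ {{i}} ∪ {N \ {i}})` of extreme rays. -/
def ESetMin (n : ℕ) : Finset (Finset (Fin n)) :=
  Finset.univ \
    (KminF n ∪ Finset.univ.image (fun i => Finset.univ \ ({i} : Finset (Fin n))))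

/-- The extreme-ray game `e_T`: value `-1` on `T` and `0` elsewhere. -/
def eRay (n : ℕ) (T S : Finset (Fin n)) : ℝ := if S = T then -1 else 0

/-- The centre of gravity `ṽ = (1/n) ∑_i v^i` of the extreme games. -/
def tildeV (n : ℕ) (v : Finset (Fin n) → ℝ) (S : Finset (Fin n)) : ℝ :=
  (∑ i : Fin n, extGame n v i S) / (n : ℝ)

/-- The centre of gravity `ẽ = (1/|E|) ∑_{T ∈ E} e_T` of the extreme rays
(minimal incomplete case). -/
def tildeEMin (n : ℕ) (S : Finset (Fin n)) : ℝ :=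
  (∑ T ∈ ESetMin n, eRay n T S) / ((ESetMin n).card : ℝ)

/-- The gap function `g^w(S) = b^w(S) - w(S)`. -/
def gapF (n : ℕ) (w : Finset (Fin n) → ℝ) (S : Finset (Fin n)) : ℝ :=
  (∑ i ∈ S, bvec n w i) - w S

/-- The τ-value of a 1-convex game: `τ_i(w) = b^w_i - g^w(N)/n`. -/
def tauVal (n : ℕ) (w : Finset (Fin n) → ℝ) (i : Fin n) : ℝ :=
  bvec n w i - gapF n w Finset.univ / (n : ℝ)

/-- The Shapley value. -/
def shapley (n : ℕ) (w : Finset (Fin n) → ℝ) (i : Fin n) : ℝ :=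
  ∑ S ∈ Finset.univ.filter (fun S : Finset (Fin n) => i ∈ S),
    ((Nat.factorial (S.card - 1) * Nat.factorial (n - S.card) : ℕ) : ℝ) /
        (Nat.factorial n : ℝ) * (w S - w (S \ {i}))

/-- The concession vector `λ^w_i = min_{S ∋ i} g^w(S)`. -/
def concession (n : ℕ) (w : Finset (Fin n) → ℝ) (i : Fin n) : ℝ :=
  (Finset.univ.filter (fun S : Finset (Fin n) => i ∈ S)).inf'
    ⟨{i}, by simp⟩ (gapF n w)

/-- The minimal right vector `a^w = b^w - λ^w`. -/
def minRight (n : ℕ) (w : Finset (Fin n) → ℝ) (i : Fin n) : ℝ :=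
  bvec n w i - concession n w i

/-- The average value `ζ̃_i(v) = v({i}) + Δ/n` of a minimal incomplete game. -/
def avgValue (n : ℕ) (v : Finset (Fin n) → ℝ) (i : Fin n) : ℝ :=
  v {i} + totalExcess n v / (n : ℝ)

/-- The zero-normalised game of a minimal incomplete game: value `Δ` on the
grand coalition and `0` on all other coalitions. -/
def zeroNorm (n : ℕ) (v : Finset (Fin n) → ℝ) (S : Finset (Fin n)) : ℝ :=
  if S = Finset.univ then totalExcess n v else 0

/-- The upper game `v̄` for incomplete games with defined upper vector. -/
def upperGameK (n : ℕ) (K : Finset (Finset (Fin n))) (v : Finset (Fin n) → ℝ)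
    (S : Finset (Fin n)) : ℝ :=
  if S ∈ K then v S else v Finset.univ - ∑ i ∈ Finset.univ \ S, bvec n v i

/-- The centre of gravity `ẽ = (1/|E|) ∑_{T ∉ K} e_T` of the extreme rays
(defined upper vector case), where `E = 2^N \ K`. -/
def tildeEK (n : ℕ) (K : Finset (Finset (Fin n))) (S : Finset (Fin n)) : ℝ :=
  (∑ T ∈ Finset.univ \ K, eRay n T S) / (((Finset.univ \ K).card : ℝ))

/-- The axioms of Theorem `thm:ave-value-axiom1`: efficiency, elementary
symmetry, and zero-normalisation invariance. -/
def AvAxioms1 (n : ℕ) (f : (Finset (Fin n) → ℝ) → Fin n → ℝ) : Prop :=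
  (∀ v, MinExtendable n v → ∑ i : Fin n, f v i = v Finset.univ) ∧
  (∀ v, MinExtendable n v → ∀ i j : Fin n, i ≠ j → v {i} = v {j} →
    f v i = f v j) ∧
  (∀ v, MinExtendable n v → ∀ i : Fin n, f v i = v {i} + f (zeroNorm n v) i)

/-- the average value `ζ̃_i(v) = v({i}) + Δ/n` is the unique value
on 1-convex-extendable minimal incomplete games satisfying efficiency,
elementary symmetry and zero-normalisation invariance. -/

lemma singleton_ne_univ' {n : ℕ} (hn : 1 < n) (i : Fin n) :
    ({i} : Finset (Fin n)) ≠ Finset.univ := by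
  intro h
  have := congrArg Finset.card h
  simp [Finset.card_univ] at this
  omega

lemma empty_ne_univ' {n : ℕ} (hn : 0 < n) :
    (∅ : Finset (Fin n)) ≠ Finset.univ := by
  intro h
  have := congrArg Finset.card h
  simp [Finset.card_univ] at this
  omega

lemma zeroNorm_singleton {n : ℕ} (hn : 1 < n) (v : Finset (Fin n) → ℝ) (i : Fin n) :
    zeroNorm n v {i} = 0 := by
  simp [zeroNorm, singleton_ne_univ' hn i]

lemma totalExcess_zeroNorm {n : ℕ} (hn : 1 < n) (v : Finset (Fin n) → ℝ) :
    totalExcess n (zeroNorm n v) = totalExcess n v := by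
  simp [totalExcess, zeroNorm, Finset.sum_ite_eq, singleton_ne_univ' hn]

lemma minExt_zeroNorm {n : ℕ} (hn : 1 < n) (v : Finset (Fin n) → ℝ)
    (hv : MinExtendable n v) : MinExtendable n (zeroNorm n v) := by
  refine ⟨?_, ?_⟩
  · simp [zeroNorm, empty_ne_univ' (by omega : 0 < n)]
  · rw [totalExcess_zeroNorm hn]; exact hv.2

theorem stmt_11 (n : ℕ) (hn : 0 < n) :
    AvAxioms1 n (avgValue n) ∧
    ∀ f : (Finset (Fin n) → ℝ) → Fin n → ℝ, AvAxioms1 n f →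
      ∀ v, MinExtendable n v → ∀ i : Fin n, f v i = avgValue n v i :=  by
  have hn' : (n : ℝ) ≠ 0 := Nat.cast_ne_zero.mpr hn.ne'
  have eff : ∀ v, ∑ i : Fin n, avgValue n v i = v Finset.univ := by
    intro v
    simp only [avgValue, Finset.sum_add_distrib, Finset.sum_const,
      Finset.card_univ, Fintype.card_fin, nsmul_eq_mul, totalExcess]
    field_simp
    ring
  constructor
  · refine ⟨fun v _ => eff v, fun v _ i j _ hij => by simp [avgValue, hij],
      fun v _ i => ?_⟩
    rcases eq_or_lt_of_le (show 1 ≤ n from hn) with h1 | h2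
    · -- n = 1
      have hiu : ({i} : Finset (Fin n)) = Finset.univ := by
        apply Finset.eq_univ_of_card
        simp [Finset.card_univ, ← h1]
      have huniq : ∀ j : Fin n, j = i := fun j => Fin.ext (by omega)
      have hΔ0 : totalExcess n (zeroNorm n v) = 0 := by
        simp only [totalExcess, zeroNorm, if_pos rfl]
        rw [Finset.sum_eq_single i (fun j _ hj => absurd (huniq j) hj) (by simp),
          Finset.sum_eq_single i (fun j _ hj => absurd (huniq j) hj) (by simp),
          if_pos hiu]
        simp
      simp [avgValue, hΔ0, zeroNorm, hiu, ← h1]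
    · simp [avgValue, zeroNorm_singleton h2, totalExcess_zeroNorm h2]
  · intro f ⟨hf1, hf2, hf3⟩ v hv i
    rcases eq_or_lt_of_le (show 1 ≤ n from hn) with h1 | h2
    · -- n = 1: efficiency alone gives the result
      have hiu : ({i} : Finset (Fin n)) = Finset.univ := by
        apply Finset.eq_univ_of_card
        simp [Finset.card_univ, ← h1]
      have huniq : ∀ j : Fin n, j = i := fun j => Fin.ext (by omega)
      have := hf1 v hv
      rw [Finset.sum_eq_single i (fun j _ hj => absurd (huniq j) hj)
        (by simp)] at this
      rw [this]
      have := eff v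
      rw [Finset.sum_eq_single i (fun j _ hj => absurd (huniq j) hj)
        (by simp)] at this
      rw [this]
    · -- n ≥ 2
      have hz := minExt_zeroNorm h2 v hv
      -- f (zeroNorm n v) is constant
      obtain ⟨j, k, hjk⟩ : ∃ j k : Fin n, j ≠ k := by
        refine ⟨⟨0, by omega⟩, ⟨1, by omega⟩, ?_⟩
        simp [Fin.ext_iff]
      have hconst : ∀ j : Fin n, f (zeroNorm n v) j = f (zeroNorm n v) i := by
        intro j
        by_cases hji : j = i
        · rw [hji]
        · exact hf2 _ hz j i hji
            (by rw [zeroNorm_singleton h2, zeroNorm_singleton h2])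
      have hsum := hf1 _ hz
      rw [Finset.sum_congr rfl (fun j _ => hconst j)] at hsum
      simp only [Finset.sum_const, Finset.card_univ, Fintype.card_fin,
        nsmul_eq_mul] at hsum
      have hzuniv : zeroNorm n v Finset.univ = totalExcess n v := by
        simp [zeroNorm]
      rw [hzuniv] at hsum
      have hfi : f (zeroNorm n v) i = totalExcess n v / n := by
        field_simp at hsum ⊢
        linarith [hsum]
      rw [hf3 v hv i, hfi, avgValue]
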